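/- The free applicative functor on a × (b → −): for fixed sets a and b, the functor S*(c) = Σ_{n∈ℕ} aⁿ × (bⁿ → c) carries a lax monoidal structure (for the cartesian monoidal structure on Set) such that for every applicative functor F, monoidal natural transformations S* ⟶ F are in natural bijection with ordinary natural transformations from the functor S(c) = a × (b → c) to F; that is, App(S*, F) ≅ [Set, Set](S, F) naturally in F. -/

import Mathlib

/-!
The free applicative functor on `S(c) = a × (b → c)`: the functor
`S*(c) = Σₙ aⁿ × (bⁿ → c)` carries a lax monoidal structure (for the cartesian monoidal
structure on `Set`) such that for every applicative functor `F`, monoidal natural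
transformations `S* ⟶ F` are in bijection with ordinary natural transformations
`S ⟶ F`, naturally in `F`.
-/

open CategoryTheory

/-- An applicative functor: a lax monoidal endofunctor of `(Set, ×)`. -/
structure AppFunctor where
  /-- the underlying endofunctor of `Set` -/
  F : Type ⥤ Type
  /-- the unit `1 ⟶ F 1` of the lax monoidal structure -/
  unit : Unit → F.obj Unit
  /-- the multiplication (tensorator) `F X × F Y ⟶ F (X × Y)` -/
  mult : ∀ X Y : Type, F.obj X × F.obj Y → F.obj (X × Y)
  mult_natural : ∀ {X X' Y Y' : Type} (f : X → X') (g : Y → Y') (x : F.obj X) (y : F.obj Y),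
    F.map (TypeCat.ofHom (Prod.map f g)) (mult X Y (x, y)) =
      mult X' Y' (F.map (TypeCat.ofHom f) x, F.map (TypeCat.ofHom g) y)
  mult_assoc : ∀ (X Y Z : Type) (x : F.obj X) (y : F.obj Y) (z : F.obj Z),
    F.map (TypeCat.ofHom (fun p : (X × Y) × Z => (p.1.1, (p.1.2, p.2))))
        (mult (X × Y) Z (mult X Y (x, y), z)) = mult X (Y × Z) (x, mult Y Z (y, z))
  left_unit : ∀ (X : Type) (x : F.obj X),
    F.map (TypeCat.ofHom Prod.snd) (mult Unit X (unit Unit.unit, x)) = x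
  right_unit : ∀ (X : Type) (x : F.obj X),
    F.map (TypeCat.ofHom Prod.fst) (mult X Unit (x, unit Unit.unit)) = x

/-- A morphism of applicative functors: a monoidal natural transformation. -/
structure AppHom (P Q : AppFunctor) where
  /-- the underlying natural transformation -/
  η : P.F ⟶ Q.F
  unit_comm : ∀ u : Unit, η.app Unit (P.unit u) = Q.unit u
  mult_comm : ∀ (X Y : Type) (x : P.F.obj X) (y : P.F.obj Y),
    η.app (X × Y) (P.mult X Y (x, y)) = Q.mult X Y (η.app X x, η.app Y y)

/-- Composition of morphisms of applicative functors. -/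
def AppHom.comp {P Q R : AppFunctor} (φ : AppHom P Q) (ψ : AppHom Q R) : AppHom P R where
  η := φ.η ≫ ψ.η
  unit_comm := by intro u; simp [φ.unit_comm, ψ.unit_comm]
  mult_comm := by intro X Y x y; simp [φ.mult_comm, ψ.mult_comm]

/-- The functor `S(c) = a × (b → c)`. -/
def SFun (a b : Type) : Type ⥤ Type where
  obj c := a × (b → c)
  map f := TypeCat.ofHom (fun x => (x.1, f ∘ x.2))

/-- The functor `S*(c) = Σₙ aⁿ × (bⁿ → c)`. -/
def SStar (a b : Type) : Type ⥤ Type where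
  obj c := Σ n : ℕ, (Fin n → a) × ((Fin n → b) → c)
  map f := TypeCat.ofHom (fun x => ⟨x.1, x.2.1, f ∘ x.2.2⟩)

theorem SStar.ext {a b c : Type} {n m : ℕ} (h : n = m)
    (as : Fin n → a) (f : (Fin n → b) → c) (as' : Fin m → a) (g : (Fin m → b) → c)
    (h1 : as = as' ∘ Fin.cast h) (h2 : ∀ bs : Fin m → b, f (bs ∘ Fin.cast h) = g bs) :
    (⟨n, as, f⟩ : (SStar a b).obj c) = ⟨m, as', g⟩ := by
  subst h
  obtain rfl : as = as' := h1
  obtain rfl : f = g := funext fun bs => h2 bs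
  rfl

def LStar (a b : Type) : AppFunctor where
  F := SStar a b
  unit _ := ⟨0, Fin.elim0, fun _ => ()⟩
  mult _X _Y p := ⟨p.1.1 + p.2.1, Fin.append p.1.2.1 p.2.2.1,
    fun bs => (p.1.2.2 (bs ∘ Fin.castAdd p.2.1), p.2.2.2 (bs ∘ Fin.natAdd p.1.1))⟩
  mult_natural f g x y := rfl
  mult_assoc X Y Z x y z := by
    obtain ⟨n, as, f⟩ := x; obtain ⟨m, as', g⟩ := y; obtain ⟨k, as'', h'⟩ := z
    refine SStar.ext (Nat.add_assoc n m k) _ _ _ _ (Fin.append_assoc as as' as'') ?_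
    intro bs
    dsimp only [Function.comp]
    refine congrArg₂ Prod.mk (congrArg f ?_)
      (congrArg₂ Prod.mk (congrArg g ?_) (congrArg h' ?_)) <;>
    · funext i; exact congrArg bs (by ext; simp; try omega)
  left_unit X x := by
    obtain ⟨n, as, f⟩ := x
    refine SStar.ext (Nat.zero_add n) _ _ _ _ (Fin.elim0_append as) ?_
    intro bs
    dsimp only [Function.comp]
    refine congrArg f ?_
    funext i; exact congrArg bs (by ext; simp; try omega)
  right_unit X x := by
    obtain ⟨n, as, f⟩ := x
    refine SStar.ext (Nat.add_zero n) _ _ _ _ (Fin.append_elim0 as) ?_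
    intro bs
    dsimp only [Function.comp]
    refine congrArg f ?_
    funext i; exact congrArg bs (by ext; simp; try omega)

theorem AppHom.ext' {P Q : AppFunctor} {φ ψ : AppHom P Q} (h : φ.η = ψ.η) : φ = ψ := by
  cases φ; cases ψ; cases h; rfl

/-- map-composition in `Type`, pointwise. -/
theorem map_map (G : Type ⥤ Type) {X Y Z : Type} (f : X → Y) (g : Y → Z) (x : G.obj X) :
    G.map (TypeCat.ofHom g) (G.map (TypeCat.ofHom f) x) = G.map (TypeCat.ofHom (g ∘ f)) x :=
  (G.map_comp_apply (TypeCat.ofHom f) (TypeCat.ofHom g) x).symm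

theorem map_congr_fun (G : Type ⥤ Type) {X Y : Type} {f g : X → Y} (h : f = g) (x : G.obj X) :
    G.map (TypeCat.ofHom f) x = G.map (TypeCat.ofHom g) x := by
  rw [h]

/-- n-fold multiplication. -/
def AppFunctor.pow (F : AppFunctor) (b : Type) : ∀ n : ℕ, (Fin n → F.F.obj b) → F.F.obj (Fin n → b)
  | 0, _ => F.F.map (TypeCat.ofHom (fun _ => Fin.elim0)) (F.unit ())
  | n+1, v => F.F.map (TypeCat.ofHom (fun (p : b × (Fin n → b)) => (Fin.cons p.1 p.2 : Fin (n+1) → b)))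
      (F.mult b (Fin n → b) (v 0, F.pow b n (fun i => v i.succ)))

theorem AppFunctor.pow_cast (F : AppFunctor) (b : Type) {n m : ℕ} (h : n = m)
    (v : Fin n → F.F.obj b) :
    F.pow b m (v ∘ Fin.cast h.symm) =
      F.F.map (TypeCat.ofHom (fun u : Fin n → b => u ∘ Fin.cast h.symm)) (F.pow b n v) := by
  subst h
  exact (F.F.map_id_apply _ _).symm

theorem nat_app {P Q : Type ⥤ Type} (η : P ⟶ Q) {X Y : Type} (f : X → Y) (x : P.obj X) :
    η.app Y (P.map (TypeCat.ofHom f) x) = Q.map (TypeCat.ofHom f) (η.app X x) :=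
  NatTrans.naturality_apply η (TypeCat.ofHom f) x

theorem hom_pow {P Q : AppFunctor} (φ : AppHom P Q) (b : Type) (n : ℕ)
    (v : Fin n → P.F.obj b) :
    φ.η.app (Fin n → b) (P.pow b n v) = Q.pow b n (fun i => φ.η.app b (v i)) := by
  induction n with
  | zero =>
    show φ.η.app _ (P.F.map _ _) = _
    rw [nat_app φ.η _ (P.unit ()), φ.unit_comm]
    rfl
  | succ n ih =>
    show φ.η.app _ (P.F.map _ _) = _
    rw [nat_app φ.η _ _, φ.mult_comm, ih]
    rfl

theorem AppFunctor.mult_nat_left (F : AppFunctor) {X X' Y : Type} (f : X → X')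
    (x : F.F.obj X) (y : F.F.obj Y) :
    F.mult X' Y (F.F.map (TypeCat.ofHom f) x, y) = F.F.map (TypeCat.ofHom (Prod.map f id)) (F.mult X Y (x, y)) := by
  have hy : F.F.map (TypeCat.ofHom (id : Y → Y)) y = y := F.F.map_id_apply Y y
  rw [F.mult_natural f id x y, hy]

theorem AppFunctor.mult_nat_right (F : AppFunctor) {X Y Y' : Type} (g : Y → Y')
    (x : F.F.obj X) (y : F.F.obj Y) :
    F.mult X Y' (x, F.F.map (TypeCat.ofHom g) y) = F.F.map (TypeCat.ofHom (Prod.map id g)) (F.mult X Y (x, y)) := by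
  have hx : F.F.map (TypeCat.ofHom (id : X → X)) x = x := F.F.map_id_apply X x
  rw [F.mult_natural id g x y, hx]

theorem AppFunctor.pow_append (F : AppFunctor) (b : Type) (n m : ℕ)
    (v : Fin n → F.F.obj b) (w : Fin m → F.F.obj b) :
    F.pow b (n + m) (Fin.append v w) =
      F.F.map (TypeCat.ofHom (fun p : (Fin n → b) × (Fin m → b) => Fin.append p.1 p.2))
        (F.mult (Fin n → b) (Fin m → b) (F.pow b n v, F.pow b m w)) := by
  induction n with
  | zero =>
    have hv : v = Fin.elim0 := funext fun i => i.elim0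
    have h : m = 0 + m := (Nat.zero_add m).symm
    rw [hv, Fin.elim0_append, show Fin.cast (Nat.zero_add m) = Fin.cast h.symm from rfl,
      F.pow_cast b h w]
    show _ = F.F.map _ (F.mult _ _ (F.F.map (TypeCat.ofHom (fun _ => Fin.elim0)) (F.unit ()), F.pow b m w))
    rw [F.mult_nat_left, map_map]
    have hfn : ((fun p : (Fin 0 → b) × (Fin m → b) => Fin.append p.1 p.2) ∘
        Prod.map (fun _ : Unit => Fin.elim0) id) =
        (fun u : Fin m → b => u ∘ Fin.cast h.symm) ∘ Prod.snd := by
      funext p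
      exact Fin.elim0_append p.2
    rw [hfn, ← map_map, F.left_unit]
  | succ n ih =>
    have h : n + m + 1 = n + 1 + m := (Nat.add_right_comm n 1 m).symm
    have hp : F.pow b (n+1) v =
        F.F.map (TypeCat.ofHom (fun p : b × (Fin n → b) => (Fin.cons p.1 p.2 : Fin (n+1) → b)))
          (F.mult b (Fin n → b) (v 0, F.pow b n (Fin.tail v))) := rfl
    rw [hp]
    conv_lhs => rw [← Fin.cons_self_tail v, Fin.append_cons,
      show Fin.cast (Nat.add_right_comm n 1 m) = Fin.cast h.symm from rfl]
    rw [F.pow_cast b h _]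
    set X : Fin (n + m + 1) → F.F.obj b := Fin.cons (v 0) (Fin.append (Fin.tail v) w) with hX
    have hpu : F.pow b (n + m + 1) X =
        F.F.map (TypeCat.ofHom (fun p : b × (Fin (n+m) → b) => (Fin.cons p.1 p.2 : Fin (n+m+1) → b)))
          (F.mult b (Fin (n+m) → b) (X 0, F.pow b (n + m) (fun i => X i.succ))) := rfl
    have h0 : X 0 = v 0 := by rw [hX]; exact Fin.cons_zero _ _
    have h1 : (fun i : Fin (n+m) => X i.succ) = Fin.append (Fin.tail v) w := by
      rw [hX]; exact funext fun i => Fin.cons_succ _ _ i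
    rw [hpu, h0, h1, ih (Fin.tail v), F.mult_nat_right, map_map, map_map, ← F.mult_assoc, map_map,
      F.mult_nat_left, map_map]
    refine map_congr_fun F.F ?_ _
    funext q
    exact (Fin.append_cons q.1.1 q.1.2 q.2).symm

def iota (a b : Type) : SFun a b ⟶ SStar a b where
  app c := TypeCat.ofHom fun (x : a × (b → c)) => (⟨1, fun _ => x.1, fun bs => x.2 (bs 0)⟩ : (SStar a b).obj c)
  naturality _ _ _ := rfl

def fromNat {a b : Type} (F : AppFunctor) (θ : SFun a b ⟶ F.F) : AppHom (LStar a b) F where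
  η :=
    { app := fun c => TypeCat.ofHom fun x => F.F.map (TypeCat.ofHom x.2.2) (F.pow b x.1 (fun i => θ.app b (x.2.1 i, id)))
      naturality := by
        intro c c' f
        ext x
        exact (map_map F.F x.2.2 f _).symm }
  unit_comm := by
    intro u; cases u
    show F.F.map (TypeCat.ofHom (fun _ => ())) (F.F.map (TypeCat.ofHom (fun _ : Unit => (Fin.elim0 : Fin 0 → b)))
      (F.unit ())) = F.unit ()
    rw [map_map, Subsingleton.elim (((fun _ => ()) ∘ (fun _ : Unit => (Fin.elim0 : Fin 0 → b)))
        : Unit → Unit) id]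
    exact F.F.map_id_apply Unit (F.unit ())
  mult_comm := by
    intro X Y x y
    obtain ⟨n, as, f⟩ := x
    obtain ⟨m, as', g⟩ := y
    show F.F.map (TypeCat.ofHom (fun bs : Fin (n + m) → b => (f (bs ∘ Fin.castAdd m), g (bs ∘ Fin.natAdd n))))
      (F.pow b (n + m) (fun i => θ.app b (Fin.append as as' i, id))) =
      F.mult X Y (F.F.map (TypeCat.ofHom f) (F.pow b n (fun i => θ.app b (as i, id))),
        F.F.map (TypeCat.ofHom g) (F.pow b m (fun j => θ.app b (as' j, id))))
    have harg : (fun i => θ.app b (Fin.append as as' i, id)) =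
        Fin.append (fun i => θ.app b (as i, id)) (fun j => θ.app b (as' j, id)) := by
      funext i
      refine Fin.addCases (fun i => ?_) (fun j => ?_) i <;> simp
    rw [harg, F.pow_append, map_map, ← F.mult_natural f g]
    refine map_congr_fun F.F ?_ _
    funext p
    dsimp only [Function.comp, Prod.map]
    exact congrArg₂ Prod.mk (congrArg f (funext fun i => Fin.append_left _ _ i))
      (congrArg g (funext fun j => Fin.append_right _ _ j))

theorem L_pow (a b : Type) (n : ℕ) (as : Fin n → a) :
    (LStar a b).pow b n
        (fun i => (⟨1, fun _ => as i, fun bs => bs 0⟩ : (SStar a b).obj b)) =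
      ⟨n, as, id⟩ := by
  induction n with
  | zero =>
    show (⟨0, Fin.elim0, (fun _ => Fin.elim0) ∘ (fun _ => ())⟩ : (SStar a b).obj _)
      = ⟨0, as, id⟩
    exact SStar.ext rfl _ _ _ _ (funext fun i => i.elim0) (fun bs => funext fun i => i.elim0)
  | succ n ih =>
    have h : 1 + n = n + 1 := Nat.add_comm 1 n
    show (SStar a b).map (TypeCat.ofHom (fun p : b × (Fin n → b) => (Fin.cons p.1 p.2 : Fin (n+1) → b)))
      ((LStar a b).mult b (Fin n → b)
        ((⟨1, fun _ => as 0, fun bs => bs 0⟩ : (SStar a b).obj b),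
         (LStar a b).pow b n
           (fun i => (⟨1, fun _ => as i.succ, fun bs => bs 0⟩ : (SStar a b).obj b)))) =
      (⟨n + 1, as, id⟩ : (SStar a b).obj (Fin (n+1) → b))
    rw [show (fun i : Fin n => (⟨1, fun _ => as i.succ, fun bs => bs 0⟩ : (SStar a b).obj b))
        = (fun i => ⟨1, fun _ => Fin.tail as i, fun bs => bs 0⟩) from rfl, ih]
    refine SStar.ext h _ _ _ _ ?_ ?_
    · dsimp only [LStar, SStar, Function.comp]
      funext i
      refine Fin.addCases (fun i => ?_) (fun j => ?_) i
      · rw [Fin.append_left]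
        exact congrArg as (by ext; simp; try omega)
      · rw [Fin.append_right]
        exact congrArg as (by ext; simp; try omega)
    · intro bs
      dsimp only [LStar, SStar, Function.comp, id, TypeCat.ofHom_apply]
      funext i
      refine Fin.cases ?_ (fun j => ?_) i
      · rw [Fin.cons_zero]
        exact congrArg bs (by ext; simp; try omega)
      · rw [Fin.cons_succ]
        exact congrArg bs (by ext; simp; try omega)

theorem left_inv_aux {a b : Type} (F : AppFunctor) (φ : AppHom (LStar a b) F) :
    fromNat F (iota a b ≫ φ.η) = φ := by
  refine AppHom.ext' ?_
  apply NatTrans.ext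
  funext c; ext x
  obtain ⟨n, as, f⟩ := x
  show F.F.map (TypeCat.ofHom f) (F.pow b n (fun i => φ.η.app b ((iota a b).app b (as i, id)))) = _
  rw [← hom_pow φ b n (fun i => (iota a b).app b (as i, id))]
  rw [show (fun i => (iota a b).app b (as i, id))
      = (fun i => (⟨1, fun _ => as i, fun bs => bs 0⟩ : (SStar a b).obj b)) from rfl, L_pow]
  exact (nat_app φ.η f _).symm

theorem right_inv_aux {a b : Type} (F : AppFunctor) (θ : SFun a b ⟶ F.F) :
    iota a b ≫ (fromNat F θ).η = θ := by
  apply NatTrans.ext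
  funext c; ext x
  show F.F.map (TypeCat.ofHom (fun bs : Fin 1 → b => x.2 (bs 0))) (F.pow b 1 (fun _ : Fin 1 => θ.app b (x.1, id))) = θ.app c x
  have hp : F.pow b 1 (fun _ : Fin 1 => θ.app b (x.1, id)) =
      F.F.map (TypeCat.ofHom (fun p : b × (Fin 0 → b) => (Fin.cons p.1 p.2 : Fin 1 → b)))
        (F.mult b (Fin 0 → b) (θ.app b (x.1, id),
          F.F.map (TypeCat.ofHom (fun _ : Unit => (Fin.elim0 : Fin 0 → b))) (F.unit ()))) := rfl
  rw [hp, F.mult_nat_right, map_map, map_map]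
  have hK : ((((fun bs : Fin 1 → b => x.2 (bs 0)) ∘
        fun p : b × (Fin 0 → b) => Fin.cons p.1 p.2) ∘
        Prod.map id fun _ : Unit => (Fin.elim0 : Fin 0 → b)))
      = (x.2 ∘ Prod.fst) := by
    funext p
    exact congrArg x.2 (Fin.cons_zero _ _)
  rw [hK, ← map_map, F.right_unit]
  exact (nat_app θ x.2 (x.1, id)).symm

/-- The free applicative functor on `S(c) = a × (b → c)`: the functor
`S*(c) = Σₙ aⁿ × (bⁿ → c)` carries a lax monoidal structure such that morphisms of
applicative functors `S* ⟶ F` correspond bijectively, and naturally in `F`, to natural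
transformations `S ⟶ F`. -/
theorem sstar_is_free_applicative (a b : Type) :
    ∃ L : AppFunctor, L.F = SStar a b ∧
      ∃ e : ∀ F : AppFunctor, AppHom L F ≃ (SFun a b ⟶ F.F),
        ∀ (F F' : AppFunctor) (ψ : AppHom F F') (φ : AppHom L F),
          e F' (φ.comp ψ) = e F φ ≫ ψ.η := by
  exact ⟨LStar a b, rfl,
    ⟨fun F => ⟨fun φ => iota a b ≫ φ.η, fromNat F, left_inv_aux F, right_inv_aux F⟩,
      fun F F' ψ φ => rfl⟩⟩
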